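/- arXiv:2203.14702 — 2 statements merged into one kernel-verified Lean document; each statement's English description precedes it below -/
import Mathlib

section
/- Let (V, μ) and (H, ν) be σ-finite measure spaces, E : ℝᵈ × V × H → ℝ an energy with finite partition function Z(ψ) and finite conditional normalizers Z_ψ(v) = ∫ exp(−E(ψ,v,h)) dν(h), defining the joint p_ψ(v,h) = exp(−E(ψ,v,h))/Z(ψ), marginal p_ψ(v) = Z_ψ(v)/Z(ψ), and posterior p_ψ(h|v) = exp(−E(ψ,v,h))/Z_ψ(v). Let q(v), q₁(h|v), p₂(v,h) be respectively a data density on V, a variational conditional density on H, and a variational joint density on V × H, with the absolute continuity and integrability needed for all KL divergences below to be finite. Define J(ψ) = D_KL(q(v) ‖ p_ψ(v)) and J_UL(ψ) = D_KL(q(v)q₁(h|v) ‖ p_ψ(v,h)) − D_KL(p₂(v,h) ‖ p_ψ(v,h)). Then the exact identity J_UL(ψ) − J(ψ) = D_KL(q(v)q₁(h|v) ‖ q(v)p_ψ(h|v)) − D_KL(p₂(v,h) ‖ p_ψ(v,h)) holds. -/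
open MeasureTheory

noncomputable section

/-- For the EBLVM with joint `p_ψ(v,h) = exp(−E(v,h))/Z`,
marginal `p_ψ(v) = Z_ψ(v)/Z` and posterior `p_ψ(h|v) = exp(−E(v,h))/Z_ψ(v)` (at a fixed
parameter ψ), data density `q`, variational conditional `q₁` and variational joint `p₂`,
with `J(ψ) = D_KL(q ‖ p_ψ(v))` and
`J_UL(ψ) = D_KL(q q₁ ‖ p_ψ(v,h)) − D_KL(p₂ ‖ p_ψ(v,h))`, the exact identity
`J_UL(ψ) − J(ψ) = D_KL(q q₁ ‖ q p_ψ(h|v)) − D_KL(p₂ ‖ p_ψ(v,h))` holds. -/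
theorem upper_level_gap_identity
    {V H : Type*} [MeasurableSpace V] [MeasurableSpace H]
    (μ : Measure V) (ν : Measure H) [SigmaFinite μ] [SigmaFinite ν]
    -- the (fixed-parameter) energy, with finite partition function and
    -- finite conditional normalizers
    (E : V → H → ℝ)
    (Z : ℝ) (hZdef : Z = ∫ p : V × H, Real.exp (-(E p.1 p.2)) ∂(μ.prod ν))
    (hZint : Integrable (fun p : V × H => Real.exp (-(E p.1 p.2))) (μ.prod ν))
    (hZpos : 0 < Z)
    (Zc : V → ℝ) (hZcdef : ∀ v, Zc v = ∫ h, Real.exp (-(E v h)) ∂ν)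
    (hZcint : ∀ᵐ v ∂μ, Integrable (fun h => Real.exp (-(E v h))) ν)
    (hZcpos : ∀ᵐ v ∂μ, 0 < Zc v)
    -- data density, variational conditional density, variational joint density
    (q : V → ℝ) (q₁ : V → H → ℝ) (p₂ : V → H → ℝ)
    (hq0 : ∀ v, 0 ≤ q v) (hqnorm : ∫ v, q v ∂μ = 1)
    (hq₁0 : ∀ v h, 0 ≤ q₁ v h) (hq₁norm : ∀ᵐ v ∂μ, ∫ h, q₁ v h ∂ν = 1)
    (hp₂0 : ∀ v h, 0 ≤ p₂ v h) (hp₂norm : ∫ p : V × H, p₂ p.1 p.2 ∂(μ.prod ν) = 1)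
    -- integrability needed for all the KL divergences involved to be finite
    (hint_J : Integrable (fun v => q v * Real.log (q v / (Zc v / Z))) μ)
    (hint_qq₁ : Integrable (fun x : V × H => q x.1 * q₁ x.1 x.2 *
      Real.log ((q x.1 * q₁ x.1 x.2) / (Real.exp (-(E x.1 x.2)) / Z))) (μ.prod ν))
    (hint_p₂ : Integrable (fun x : V × H => p₂ x.1 x.2 *
      Real.log (p₂ x.1 x.2 / (Real.exp (-(E x.1 x.2)) / Z))) (μ.prod ν))
    (hint_cond : Integrable (fun x : V × H => q x.1 * q₁ x.1 x.2 *
      Real.log ((q x.1 * q₁ x.1 x.2) / (q x.1 * (Real.exp (-(E x.1 x.2)) / Zc x.1))))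
      (μ.prod ν)) :
    -- J_UL − J = D_KL(q q₁ ‖ q p_ψ(h|v)) − D_KL(p₂ ‖ p_ψ(v,h))
    ((∫ x : V × H, q x.1 * q₁ x.1 x.2 *
        Real.log ((q x.1 * q₁ x.1 x.2) / (Real.exp (-(E x.1 x.2)) / Z)) ∂(μ.prod ν))
      - (∫ x : V × H, p₂ x.1 x.2 *
        Real.log (p₂ x.1 x.2 / (Real.exp (-(E x.1 x.2)) / Z)) ∂(μ.prod ν)))
    - (∫ v, q v * Real.log (q v / (Zc v / Z)) ∂μ)
    = (∫ x : V × H, q x.1 * q₁ x.1 x.2 *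
        Real.log ((q x.1 * q₁ x.1 x.2) / (q x.1 * (Real.exp (-(E x.1 x.2)) / Zc x.1)))
        ∂(μ.prod ν))
      - ∫ x : V × H, p₂ x.1 x.2 *
        Real.log (p₂ x.1 x.2 / (Real.exp (-(E x.1 x.2)) / Z)) ∂(μ.prod ν) := by

  -- notation
  set g : V × H → ℝ := fun x => q x.1 * q₁ x.1 x.2 * Real.log (q x.1 / (Zc x.1 / Z)) with hg
  -- lift the a.e. positivity of Zc to the product measure
  have hZcprod : ∀ᵐ x : V × H ∂(μ.prod ν), 0 < Zc x.1 :=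
    (Measure.quasiMeasurePreserving_fst (μ := μ) (ν := ν)).ae hZcpos
  -- pointwise log decomposition
  have hpt : ∀ᵐ x : V × H ∂(μ.prod ν),
      q x.1 * q₁ x.1 x.2 * Real.log ((q x.1 * q₁ x.1 x.2) / (Real.exp (-(E x.1 x.2)) / Z))
      = q x.1 * q₁ x.1 x.2 *
          Real.log ((q x.1 * q₁ x.1 x.2) / (q x.1 * (Real.exp (-(E x.1 x.2)) / Zc x.1)))
        + g x := by
    filter_upwards [hZcprod] with x hzc
    rcases eq_or_lt_of_le (hq0 x.1) with hq | hq
    · simp [hg, ← hq]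
    rcases eq_or_lt_of_le (hq₁0 x.1 x.2) with hq1 | hq1
    · simp [hg, ← hq1]
    have he : (0:ℝ) < Real.exp (-(E x.1 x.2)) := Real.exp_pos _
    have h1 : (q x.1 * q₁ x.1 x.2) / (q x.1 * (Real.exp (-(E x.1 x.2)) / Zc x.1)) ≠ 0 := by
      positivity
    have h2 : q x.1 / (Zc x.1 / Z) ≠ 0 := by positivity
    simp only [hg]
    rw [← mul_add, ← Real.log_mul h1 h2]
    congr 2
    field_simp
  -- g is integrable
  have hgint : Integrable g (μ.prod ν) := by
    refine (hint_qq₁.sub hint_cond).congr ?_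
    filter_upwards [hpt] with x hx
    simp only [Pi.sub_apply]
    linarith [hx]
  -- integral of g equals the J integral
  have hgeq : ∫ x, g x ∂(μ.prod ν) = ∫ v, q v * Real.log (q v / (Zc v / Z)) ∂μ := by
    rw [MeasureTheory.integral_prod _ hgint]
    refine integral_congr_ae ?_
    filter_upwards [hq₁norm] with v hv
    have : ∀ h, g (v, h) = (q v * Real.log (q v / (Zc v / Z))) * q₁ v h := by
      intro h; simp only [hg]; ring
    simp only [this, MeasureTheory.integral_const_mul, hv, mul_one]
  -- split the main integral
  have hsplit : ∫ x : V × H, q x.1 * q₁ x.1 x.2 *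
        Real.log ((q x.1 * q₁ x.1 x.2) / (Real.exp (-(E x.1 x.2)) / Z)) ∂(μ.prod ν)
      = (∫ x : V × H, q x.1 * q₁ x.1 x.2 *
        Real.log ((q x.1 * q₁ x.1 x.2) / (q x.1 * (Real.exp (-(E x.1 x.2)) / Zc x.1)))
          ∂(μ.prod ν)) + ∫ x, g x ∂(μ.prod ν) := by
    rw [← integral_add hint_cond hgint]
    exact integral_congr_ae hpt
  rw [hsplit, hgeq]
  ring
end
end

section
/- Under the setting of the BiDVL objectives, the gap between the upper-level objective and the original objective is bounded by the lower-level objective with KL divergence: |J_UL(ψ) − J(ψ)| ≤ D_KL(q(v)q₁(h|v) ‖ q(v)p_ψ(h|v)) + D_KL(p₂(v,h) ‖ p_ψ(v,h)), where J(ψ) = D_KL(q(v) ‖ p_ψ(v)) and J_UL(ψ) = D_KL(q(v)q₁(h|v) ‖ p_ψ(v,h)) − D_KL(p₂(v,h) ‖ p_ψ(v,h)), assuming all KL divergences involved are finite. -/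
open MeasureTheory

noncomputable section

/-- Pointwise Gibbs inequality. -/
lemma kl_pointwise {p r : ℝ} (hp : 0 ≤ p) (hr : 0 ≤ r) (h0 : r = 0 → p = 0) :
    p - r ≤ p * Real.log (p / r) := by
  rcases eq_or_lt_of_le hr with hr0 | hrpos
  · have hp0 := h0 hr0.symm
    rw [hp0, ← hr0]; simp
  rcases eq_or_lt_of_le hp with hp0 | hppos
  · simp [← hp0]; linarith
  have hlog : Real.log (r / p) ≤ r / p - 1 :=
    Real.log_le_sub_one_of_pos (by positivity)
  have hrw : Real.log (p / r) = -Real.log (r / p) := by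
    rw [← Real.log_inv]; congr 1; field_simp
  rw [hrw]
  have h1 : p * (1 - r / p) = p - r := by field_simp
  nlinarith [mul_le_mul_of_nonneg_left hlog hp]


/-- The gap between the upper-level objective
`J_UL(ψ) = D_KL(q q₁ ‖ p_ψ(v,h)) − D_KL(p₂ ‖ p_ψ(v,h))` and the original objective
`J(ψ) = D_KL(q ‖ p_ψ(v))` is bounded by the lower-level objective with KL divergence:
`|J_UL(ψ) − J(ψ)| ≤ D_KL(q q₁ ‖ q p_ψ(h|v)) + D_KL(p₂ ‖ p_ψ(v,h))`. -/
theorem upper_level_gap_bound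
    {V H : Type*} [MeasurableSpace V] [MeasurableSpace H]
    (μ : Measure V) (ν : Measure H) [SigmaFinite μ] [SigmaFinite ν]
    -- the (fixed-parameter) energy, with finite partition function and
    -- finite conditional normalizers
    (E : V → H → ℝ)
    (Z : ℝ) (hZdef : Z = ∫ p : V × H, Real.exp (-(E p.1 p.2)) ∂(μ.prod ν))
    (hZint : Integrable (fun p : V × H => Real.exp (-(E p.1 p.2))) (μ.prod ν))
    (hZpos : 0 < Z)
    (Zc : V → ℝ) (hZcdef : ∀ v, Zc v = ∫ h, Real.exp (-(E v h)) ∂ν)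
    (hZcint : ∀ᵐ v ∂μ, Integrable (fun h => Real.exp (-(E v h))) ν)
    (hZcpos : ∀ᵐ v ∂μ, 0 < Zc v)
    -- data density, variational conditional density, variational joint density
    (q : V → ℝ) (q₁ : V → H → ℝ) (p₂ : V → H → ℝ)
    (hq0 : ∀ v, 0 ≤ q v) (hqnorm : ∫ v, q v ∂μ = 1)
    (hq₁0 : ∀ v h, 0 ≤ q₁ v h) (hq₁norm : ∀ᵐ v ∂μ, ∫ h, q₁ v h ∂ν = 1)
    (hp₂0 : ∀ v h, 0 ≤ p₂ v h) (hp₂norm : ∫ p : V × H, p₂ p.1 p.2 ∂(μ.prod ν) = 1)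
    -- integrability needed for all the KL divergences involved to be finite
    (hint_J : Integrable (fun v => q v * Real.log (q v / (Zc v / Z))) μ)
    (hint_qq₁ : Integrable (fun x : V × H => q x.1 * q₁ x.1 x.2 *
      Real.log ((q x.1 * q₁ x.1 x.2) / (Real.exp (-(E x.1 x.2)) / Z))) (μ.prod ν))
    (hint_p₂ : Integrable (fun x : V × H => p₂ x.1 x.2 *
      Real.log (p₂ x.1 x.2 / (Real.exp (-(E x.1 x.2)) / Z))) (μ.prod ν))
    (hint_cond : Integrable (fun x : V × H => q x.1 * q₁ x.1 x.2 *
      Real.log ((q x.1 * q₁ x.1 x.2) / (q x.1 * (Real.exp (-(E x.1 x.2)) / Zc x.1))))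
      (μ.prod ν)) :
    |((∫ x : V × H, q x.1 * q₁ x.1 x.2 *
        Real.log ((q x.1 * q₁ x.1 x.2) / (Real.exp (-(E x.1 x.2)) / Z)) ∂(μ.prod ν))
      - (∫ x : V × H, p₂ x.1 x.2 *
        Real.log (p₂ x.1 x.2 / (Real.exp (-(E x.1 x.2)) / Z)) ∂(μ.prod ν)))
    - (∫ v, q v * Real.log (q v / (Zc v / Z)) ∂μ)|
    ≤ (∫ x : V × H, q x.1 * q₁ x.1 x.2 *
        Real.log ((q x.1 * q₁ x.1 x.2) / (q x.1 * (Real.exp (-(E x.1 x.2)) / Zc x.1)))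
        ∂(μ.prod ν))
      + ∫ x : V × H, p₂ x.1 x.2 *
        Real.log (p₂ x.1 x.2 / (Real.exp (-(E x.1 x.2)) / Z)) ∂(μ.prod ν) := by
  have hZne : Z ≠ 0 := ne_of_gt hZpos
  -- name the four integrals
  set A : ℝ := ∫ x : V × H, q x.1 * q₁ x.1 x.2 *
      Real.log ((q x.1 * q₁ x.1 x.2) / (Real.exp (-(E x.1 x.2)) / Z)) ∂(μ.prod ν) with hA
  set B : ℝ := ∫ x : V × H, p₂ x.1 x.2 *
      Real.log (p₂ x.1 x.2 / (Real.exp (-(E x.1 x.2)) / Z)) ∂(μ.prod ν) with hB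
  set J : ℝ := ∫ v, q v * Real.log (q v / (Zc v / Z)) ∂μ with hJ
  set C : ℝ := ∫ x : V × H, q x.1 * q₁ x.1 x.2 *
      Real.log ((q x.1 * q₁ x.1 x.2) / (q x.1 * (Real.exp (-(E x.1 x.2)) / Zc x.1)))
      ∂(μ.prod ν) with hC
  -- integrability facts
  have hp₂int : Integrable (fun x : V × H => p₂ x.1 x.2) (μ.prod ν) :=
    integrable_of_integral_eq_one hp₂norm
  have hrint : Integrable (fun x : V × H => Real.exp (-(E x.1 x.2)) / Z) (μ.prod ν) :=
    hZint.div_const Z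
  -- B ≥ 0
  have hB0 : 0 ≤ B := by
    have hle : ∀ x : V × H, p₂ x.1 x.2 - Real.exp (-(E x.1 x.2)) / Z ≤
        p₂ x.1 x.2 * Real.log (p₂ x.1 x.2 / (Real.exp (-(E x.1 x.2)) / Z)) := by
      intro x
      refine kl_pointwise (hp₂0 _ _) (by positivity) ?_
      intro h
      exfalso
      have : (0:ℝ) < Real.exp (-(E x.1 x.2)) / Z := by positivity
      linarith
    have hmono := integral_mono (hp₂int.sub hrint) hint_p₂ hle
    simp only [Pi.sub_apply] at hmono
    have hzero : ∫ x : V × H, (p₂ x.1 x.2 - Real.exp (-(E x.1 x.2)) / Z) ∂(μ.prod ν) = 0 := by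
      rw [integral_sub hp₂int hrint, hp₂norm, integral_div, ← hZdef, div_self hZne]
      ring
    rw [hzero] at hmono
    exact hmono
  -- C ≥ 0
  have hC0 : 0 ≤ C := by
    rw [hC, integral_prod _ hint_cond]
    refine integral_nonneg_of_ae ?_
    filter_upwards [hZcpos, hq₁norm, hZcint, hint_cond.prod_right_ae] with v hZc hq1n hZci hfc
    rw [Pi.zero_apply]
    have hZcne : Zc v ≠ 0 := ne_of_gt hZc
    have hq1i : Integrable (fun h => q₁ v h) ν := integrable_of_integral_eq_one hq1n
    have hpi : Integrable (fun h => q v * q₁ v h) ν := hq1i.const_mul _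
    have hri : Integrable (fun h => q v * (Real.exp (-(E v h)) / Zc v)) ν :=
      (hZci.div_const _).const_mul _
    have hle : ∀ h, q v * q₁ v h - q v * (Real.exp (-(E v h)) / Zc v) ≤
        q v * q₁ v h * Real.log ((q v * q₁ v h) /
          (q v * (Real.exp (-(E v h)) / Zc v))) := by
      intro h
      refine kl_pointwise (mul_nonneg (hq0 v) (hq₁0 v h))
        (mul_nonneg (hq0 v) (div_nonneg (Real.exp_pos _).le hZc.le)) ?_
      intro h0
      have hqz : q v = 0 := by
        by_contra hq
        have hq' : 0 < q v := lt_of_le_of_ne (hq0 v) (Ne.symm hq)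
        have : (0:ℝ) < q v * (Real.exp (-(E v h)) / Zc v) :=
          mul_pos hq' (div_pos (Real.exp_pos _) hZc)
        linarith
      rw [hqz, zero_mul]
    have hmono := integral_mono (hpi.sub hri) hfc hle
    simp only [Pi.sub_apply] at hmono
    have hzero : ∫ h, (q v * q₁ v h - q v * (Real.exp (-(E v h)) / Zc v)) ∂ν = 0 := by
      rw [integral_sub hpi hri, integral_const_mul, integral_const_mul, hq1n,
        integral_div, ← hZcdef, div_self hZcne]
      ring
    rw [hzero] at hmono
    exact hmono
  -- chain rule: A - C = J
  have hkey : A - C = J := by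
    rw [hA, hC, ← integral_sub hint_qq₁ hint_cond]
    have hZcprod : ∀ᵐ x : V × H ∂(μ.prod ν), 0 < Zc x.1 :=
      (Measure.quasiMeasurePreserving_fst (μ := μ) (ν := ν)).tendsto_ae.eventually hZcpos
    have hae : (fun x : V × H => q x.1 * q₁ x.1 x.2 *
          Real.log ((q x.1 * q₁ x.1 x.2) / (Real.exp (-(E x.1 x.2)) / Z)) -
        q x.1 * q₁ x.1 x.2 *
          Real.log ((q x.1 * q₁ x.1 x.2) / (q x.1 * (Real.exp (-(E x.1 x.2)) / Zc x.1))))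
        =ᵐ[μ.prod ν]
        (fun x : V × H => q x.1 * q₁ x.1 x.2 * Real.log (q x.1 / (Zc x.1 / Z))) := by
      filter_upwards [hZcprod] with x hZc
      by_cases hab : q x.1 * q₁ x.1 x.2 = 0
      · simp [hab]
      · have hab' : 0 < q x.1 * q₁ x.1 x.2 :=
          lt_of_le_of_ne (mul_nonneg (hq0 _) (hq₁0 _ _)) (Ne.symm hab)
        have ha : 0 < q x.1 := by
          rcases mul_pos_iff.mp hab' with ⟨h1, _⟩ | ⟨h1, h2⟩
          · exact h1
          · exact absurd h2 (not_lt.mpr (hq₁0 _ _))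
        have hs : (0:ℝ) < Real.exp (-(E x.1 x.2)) := Real.exp_pos _
        have hZcne : Zc x.1 ≠ 0 := ne_of_gt hZc
        rw [← mul_sub]
        congr 1
        have hd1 : q x.1 * (Real.exp (-(E x.1 x.2)) / Zc x.1) ≠ 0 :=
          ne_of_gt (mul_pos ha (div_pos hs hZc))
        rw [Real.log_div hab (div_ne_zero (ne_of_gt hs) hZne), Real.log_div hab hd1,
          Real.log_mul (ne_of_gt ha) (div_ne_zero (ne_of_gt hs) hZcne),
          Real.log_div (ne_of_gt hs) hZcne, Real.log_div (ne_of_gt hs) hZne,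
          Real.log_div (ne_of_gt ha) (div_ne_zero hZcne hZne),
          Real.log_div hZcne hZne]
        ring
    rw [integral_congr_ae hae]
    have hgint : Integrable
        (fun x : V × H => q x.1 * q₁ x.1 x.2 * Real.log (q x.1 / (Zc x.1 / Z)))
        (μ.prod ν) := (hint_qq₁.sub hint_cond).congr hae
    rw [integral_prod _ hgint, hJ]
    refine integral_congr_ae ?_
    filter_upwards [hq₁norm] with v hn
    have : (fun h => q v * q₁ v h * Real.log (q v / (Zc v / Z))) =
        fun h => (q v * Real.log (q v / (Zc v / Z))) * q₁ v h := by
      funext h; ring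
    rw [this, integral_const_mul, hn, mul_one]
  rw [abs_le]
  constructor <;> linarith
end
end
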